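/- Let D be an F-central division algebra, let G be a subgroup of D^* such that the F-subalgebra of D generated by G is all of D (G is absolutely irreducible), and let A be a normal abelian subgroup of G. Write H = C_G(A) for the centralizer of A in G, and let F[H] and F[A] denote the F-subalgebras of D generated by H and by A respectively. Then: (1) the dimension of D as a left vector space over the division subalgebra F[H] equals the index [G : H]; and (2) F[A] is a commutative subalgebra that is a field, the extension F[A]/F is Galois, and Gal(F[A]/F) is isomorphic to the quotient group G/H. -/

import Mathlib

universe u v

section Aux

variable {F : Type v} {D : Type u} [Field F] [DivisionRing D] [Algebra F D]

/-- Conjugation by a unit as an `F`-algebra automorphism of `D`. -/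
def stmt2ConjAE (g : Dˣ) : D ≃ₐ[F] D where
  toFun x := ↑g * x * ↑g⁻¹
  invFun x := ↑g⁻¹ * x * ↑g
  left_inv x := by simp [mul_assoc]
  right_inv x := by simp [mul_assoc]
  map_mul' x y := by
    have : (↑g⁻¹ : D) * ↑g = 1 := g.inv_mul
    simp [mul_assoc, this]
  map_add' x y := by simp [mul_add, add_mul]
  commutes' r := by
    show ↑g * algebraMap F D r * ↑g⁻¹ = algebraMap F D r
    rw [mul_assoc, Algebra.commutes r (↑g⁻¹ : D), ← mul_assoc]
    simp

@[simp] lemma stmt2ConjAE_apply (g : Dˣ) (x : D) :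
    stmt2ConjAE (F := F) g x = ↑g * x * ↑g⁻¹ := rfl

lemma stmt2_adjoin_comm {s t : Set D}
    (h : ∀ x ∈ s, ∀ y ∈ t, x * y = y * x) :
    ∀ x ∈ Algebra.adjoin F s, ∀ y ∈ Algebra.adjoin F t, x * y = y * x := by
  intro x hx y hy
  have h1 : Algebra.adjoin F t ≤ Subalgebra.centralizer F s :=
    Algebra.adjoin_le fun y hy =>
      (Subalgebra.mem_centralizer_iff F).mpr fun x hx => h x hx y hy
  have h2 : ∀ z ∈ s, z * y = y * z := (Subalgebra.mem_centralizer_iff F).mp (h1 hy)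
  have h3 : Algebra.adjoin F s ≤ Subalgebra.centralizer F {y} :=
    Algebra.adjoin_le fun z hz =>
      (Subalgebra.mem_centralizer_iff F).mpr fun w hw => by
        rw [Set.mem_singleton_iff.mp hw]; exact (h2 z hz).symm
  exact ((Subalgebra.mem_centralizer_iff F).mp (h3 hx) y rfl).symm

/-- Dedekind-style independence of units over a subalgebra commuting with a
separating set `T`. -/
lemma stmt2_linearIndependent (S : Subalgebra F D) (T : Set D) (hTS : T ⊆ S)
    (hcomm : ∀ s ∈ S, ∀ t ∈ T, s * t = t * s)
    {ι : Type*} (v : ι → Dˣ)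
    (hstab : ∀ i, ∀ t ∈ T, (↑(v i) : D) * t * ↑(v i)⁻¹ ∈ T)
    (hsep : ∀ i j, i ≠ j → ∃ t ∈ T,
      (↑(v i) : D) * t * ↑(v i)⁻¹ ≠ ↑(v j) * t * ↑(v j)⁻¹) :
    LinearIndependent ↥S (fun i => ((v i : D))) := by
  classical
  rw [linearIndependent_iff']
  intro s
  induction s using Finset.strongInductionOn with
  | _ s ih =>
  intro g hg i hi
  by_contra hgi
  by_cases hone : ∀ j ∈ s, j ≠ i → g j = 0
  · have h0 : (∑ l ∈ s, g l • (↑(v l) : D)) = g i • (↑(v i) : D) :=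
      Finset.sum_eq_single_of_mem i hi (fun j hj hji => by rw [hone j hj hji, zero_smul])
    rw [hg] at h0
    have : (↑(g i) : D) * ↑(v i) = 0 := h0.symm
    have : (↑(g i) : D) = 0 := by
      have := congrArg (fun x => x * (↑(v i)⁻¹ : D)) this
      simpa [mul_assoc] using this
    exact hgi (Subtype.ext this)
  · push_neg at hone
    obtain ⟨j, hj, hji, hgj⟩ := hone
    obtain ⟨t, htT, hts⟩ := hsep j i hji
    set σ : ι → D := fun l => ↑(v l) * t * ↑(v l)⁻¹ with hσ
    have hσT : ∀ l, σ l ∈ T := fun l => hstab l t htT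
    have hσS : ∀ l, σ l ∈ S := fun l => hTS (hσT l)
    set g' : ι → ↥S := fun l =>
      ⟨(σ l - σ i) * ↑(g l), S.mul_mem (S.sub_mem (hσS l) (hσS i)) (g l).2⟩ with hg'
    have expand : ∀ l, (↑(g' l) : D) * ↑(v l) =
        (↑(g l) : D) * ↑(v l) * t - σ i * ((↑(g l) : D) * ↑(v l)) := by
      intro l
      have hc : σ l * ↑(g l) = ↑(g l) * σ l := (hcomm _ (g l).2 _ (hσT l)).symm
      have hv : σ l * ↑(v l) = ↑(v l) * t := by
        show ↑(v l) * t * ↑(v l)⁻¹ * ↑(v l) = _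
        rw [mul_assoc]; simp
      show (σ l - σ i) * ↑(g l) * ↑(v l) = _
      rw [sub_mul, sub_mul, hc, mul_assoc, hv, ← mul_assoc, mul_assoc, mul_assoc (σ i)]
    have h1 : ∑ l ∈ s, (g' l) • (↑(v l) : D) = 0 := by
      calc ∑ l ∈ s, (g' l) • (↑(v l) : D)
          = ∑ l ∈ s, ((↑(g l) : D) * ↑(v l) * t - σ i * ((↑(g l) : D) * ↑(v l))) :=
            Finset.sum_congr rfl (fun l _ => expand l)
        _ = (∑ l ∈ s, (↑(g l) : D) * ↑(v l)) * t
              - σ i * ∑ l ∈ s, ((↑(g l) : D) * ↑(v l)) := by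
            rw [Finset.sum_sub_distrib, Finset.sum_mul, Finset.mul_sum]
        _ = 0 := by
            have : (∑ l ∈ s, (↑(g l) : D) * ↑(v l)) = 0 := hg
            rw [this, zero_mul, mul_zero, sub_zero]
    have hsum' : ∑ l ∈ s.erase i, (g' l) • (↑(v l) : D) = 0 := by
      rw [← h1]
      apply Finset.sum_subset (Finset.erase_subset i s)
      intro x hx hnx
      have hxi : x = i := by
        by_contra hxi
        exact hnx (Finset.mem_erase.mpr ⟨hxi, hx⟩)
      subst hxi
      have : g' x = 0 := Subtype.ext (by show (σ x - σ x) * ↑(g x) = 0; rw [sub_self, zero_mul])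
      rw [this, zero_smul]
    have hall := ih (s.erase i) (Finset.erase_ssubset hi) g' hsum' j
      (Finset.mem_erase.mpr ⟨hji, hj⟩)
    have hD : (σ j - σ i) * (↑(g j) : D) = 0 := congrArg Subtype.val hall
    rcases mul_eq_zero.mp hD with h | h
    · exact hts (sub_eq_zero.mp h)
    · exact hgj (Subtype.ext h)

end Aux

/-- Let `D` be an `F`-central division algebra, `G ≤ D^*` an absolutely irreducible
subgroup (the `F`-subalgebra generated by `G` is all of `D`), and `A` a normal abelian
subgroup of `G`.  With `H = C_G(A)` the centralizer of `A` in `G`: (1) the dimension of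
`D` as a left vector space over the division subalgebra `F[H]` equals the index `[G : H]`;
(2) `F[A]` is commutative, is a field (isomorphic via an `F`-algebra embedding to a field
`K`), `K/F` is Galois, and `Gal(K/F) ≅ G/H` (witnessed by a surjective homomorphism
`G →* Gal(K/F)` with kernel `H`). -/
theorem stmt_2 {F : Type v} {D : Type u} [Field F] [DivisionRing D] [Algebra F D]
    (hcenter : Subalgebra.center F D = ⊥) [FiniteDimensional F D]
    (G : Subgroup Dˣ)
    (hirr : Algebra.adjoin F (Units.val '' (G : Set Dˣ)) = ⊤)
    (A : Subgroup Dˣ) (hAG : A ≤ G)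
    (hnorm : ∀ g ∈ G, ∀ a ∈ A, g * a * g⁻¹ ∈ A)
    (habel : ∀ a ∈ A, ∀ b ∈ A, a * b = b * a) :
    (Module.finrank
        ↥(Algebra.adjoin F (Units.val ''
            ((Subgroup.centralizer (A : Set Dˣ) ⊓ G : Subgroup Dˣ) : Set Dˣ))) D =
      (Subgroup.centralizer (A : Set Dˣ) ⊓ G).relIndex G) ∧
    (∀ x ∈ Algebra.adjoin F (Units.val '' (A : Set Dˣ)),
      ∀ y ∈ Algebra.adjoin F (Units.val '' (A : Set Dˣ)), x * y = y * x) ∧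
    (∃ (K : Type u) (_ : Field K) (_ : Algebra F K) (f : K →ₐ[F] D),
      f.range = Algebra.adjoin F (Units.val '' (A : Set Dˣ)) ∧ IsGalois F K ∧
      ∃ φ : ↥G →* (K ≃ₐ[F] K), Function.Surjective φ ∧
        φ.ker = (Subgroup.centralizer (A : Set Dˣ) ⊓ G).subgroupOf G) := by
  classical
  have hint : Algebra.IsIntegral F D := Algebra.IsIntegral.of_finite F D
  set Hgrp : Subgroup Dˣ := Subgroup.centralizer (A : Set Dˣ) ⊓ G with hHgrp
  have hAH : A ≤ Hgrp := fun u hu =>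
    ⟨Subgroup.mem_centralizer_iff.mpr fun a ha => habel a ha u hu, hAG hu⟩
  have hHG : Hgrp ≤ G := inf_le_right
  have hHnormal : ∀ g ∈ G, ∀ h ∈ Hgrp, g * h * g⁻¹ ∈ Hgrp := by
    intro g hg h hh
    refine ⟨Subgroup.mem_centralizer_iff.mpr fun a ha => ?_,
      G.mul_mem (G.mul_mem hg (hHG hh)) (G.inv_mem hg)⟩
    have key := Subgroup.mem_centralizer_iff.mp hh.1 (g⁻¹ * a * g⁻¹⁻¹)
      (hnorm g⁻¹ (G.inv_mem hg) a ha)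
    simp only [inv_inv] at key
    calc a * (g * h * g⁻¹) = g * ((g⁻¹ * a * g) * h) * g⁻¹ := by group
      _ = g * (h * (g⁻¹ * a * g)) * g⁻¹ := by rw [key]
      _ = g * h * g⁻¹ * a := by group
  set K0 : Subalgebra F D := Algebra.adjoin F (Units.val '' (A : Set Dˣ)) with hK0def
  set S : Subalgebra F D := Algebra.adjoin F (Units.val '' (Hgrp : Set Dˣ)) with hSdef
  have hcommAA : ∀ x ∈ Units.val '' (A : Set Dˣ), ∀ y ∈ Units.val '' (A : Set Dˣ),
      x * y = y * x := by
    rintro _ ⟨a, ha, rfl⟩ _ ⟨b, hb, rfl⟩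
    simpa using congrArg Units.val (habel a ha b hb)
  have hcommHA : ∀ x ∈ Units.val '' (Hgrp : Set Dˣ), ∀ y ∈ Units.val '' (A : Set Dˣ),
      x * y = y * x := by
    rintro _ ⟨h, hh, rfl⟩ _ ⟨a, ha, rfl⟩
    simpa using (congrArg Units.val (Subgroup.mem_centralizer_iff.mp hh.1 a ha)).symm
  have part2a : ∀ x ∈ K0, ∀ y ∈ K0, x * y = y * x := stmt2_adjoin_comm hcommAA
  have hScommK : ∀ s ∈ S, ∀ k ∈ K0, s * k = k * s := stmt2_adjoin_comm hcommHA
  have hK0S : K0 ≤ S := Algebra.adjoin_mono (Set.image_mono hAH)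
  have hinv : ∀ (S' : Subalgebra F D) (x : D), x ∈ S' → x⁻¹ ∈ S' := fun S' x hx =>
    (Algebra.IsIntegral.isIntegral (R := F) x).inv_mem hx
  have hconjA : ∀ g : Dˣ, g ∈ G → ∀ x ∈ Units.val '' (A : Set Dˣ),
      (↑g : D) * x * ↑g⁻¹ ∈ Units.val '' (A : Set Dˣ) := by
    rintro g hg _ ⟨a, ha, rfl⟩
    exact ⟨g * a * g⁻¹, hnorm g hg a ha, by simp⟩
  have himg : ∀ g : Dˣ, g ∈ G →
      (stmt2ConjAE (F := F) g) '' (Units.val '' (A : Set Dˣ)) = Units.val '' (A : Set Dˣ) := by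
    intro g hg
    apply subset_antisymm
    · rintro _ ⟨x, hx, rfl⟩; exact hconjA g hg x hx
    · rintro x hx
      refine ⟨(↑g⁻¹ : D) * x * ↑g⁻¹⁻¹, hconjA g⁻¹ (G.inv_mem hg) x hx, ?_⟩
      simp [mul_assoc]
  have hconjK0 : ∀ g : Dˣ, g ∈ G → ∀ x ∈ K0, (↑g : D) * x * ↑g⁻¹ ∈ K0 := by
    intro g hg x hx
    have hmap : K0.map (stmt2ConjAE (F := F) g).toAlgHom = K0 := by
      rw [hK0def, AlgHom.map_adjoin]
      congr 1
      exact himg g hg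
    rw [← hmap]
    exact Subalgebra.mem_map.mpr ⟨x, hx, rfl⟩
  have hcentralK0 : ∀ g : Dˣ, g ∈ Subgroup.centralizer (A : Set Dˣ) →
      ∀ x ∈ K0, (↑g : D) * x = x * ↑g := by
    intro g hg x hx
    have h1 : ∀ a ∈ Units.val '' (A : Set Dˣ), ∀ y ∈ ({(↑g : D)} : Set D),
        a * y = y * a := by
      rintro _ ⟨a, ha, rfl⟩ y hy
      rw [Set.mem_singleton_iff.mp hy]
      simpa using congrArg Units.val (Subgroup.mem_centralizer_iff.mp hg a ha)
    exact (stmt2_adjoin_comm h1 x hx (↑g) (Algebra.subset_adjoin rfl)).symm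
  -- the field structure on K0
  have hKfield : IsField ↥K0 := by
    refine ⟨⟨0, 1, fun h => zero_ne_one (congrArg Subtype.val h)⟩,
      fun x y => Subtype.ext (part2a _ x.2 _ y.2), ?_⟩
    intro a ha
    exact ⟨⟨(↑a : D)⁻¹, hinv _ _ a.2⟩,
      Subtype.ext (mul_inv_cancel₀ (fun h => ha (Subtype.ext h)))⟩
  letI fK : Field ↥K0 := hKfield.toField
  haveI finK : FiniteDimensional F ↥K0 := inferInstance
  -- the conjugation homomorphism
  have hmemconj : ∀ (g : Dˣ), g ∈ G → ∀ k : ↥K0, (↑g : D) * ↑k * ↑g⁻¹ ∈ K0 :=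
    fun g hg k => hconjK0 g hg ↑k k.2
  obtain ⟨conjK, hconjK_apply⟩ : ∃ conjK : ↥G →* (↥K0 ≃ₐ[F] ↥K0),
      ∀ (g : ↥G) (k : ↥K0), (↑(conjK g k) : D) = ↑(g : Dˣ) * ↑k * ↑(g : Dˣ)⁻¹ := by
    refine ⟨{
      toFun := fun g => {
        toFun := fun k => ⟨(↑(g : Dˣ) : D) * ↑k * ↑(g : Dˣ)⁻¹, hmemconj _ g.2 k⟩
        invFun := fun k => ⟨(↑(g : Dˣ)⁻¹ : D) * ↑k * ↑(g : Dˣ)⁻¹⁻¹,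
          hmemconj _ (G.inv_mem g.2) k⟩
        left_inv := fun k => Subtype.ext (by simp [mul_assoc])
        right_inv := fun k => Subtype.ext (by simp [mul_assoc])
        map_mul' := fun k l => Subtype.ext (by
          have h1 : (↑(g : Dˣ)⁻¹ : D) * ↑(g : Dˣ) = 1 := (g : Dˣ).inv_mul
          show (↑(g : Dˣ) : D) * ↑(k * l) * ↑(g : Dˣ)⁻¹ = _
          have h2 : ((k * l : ↥K0) : D) = (↑k : D) * ↑l := rfl
          rw [h2]
          simp [mul_assoc, h1])
        map_add' := fun k l => Subtype.ext (by
          have h2 : ((k + l : ↥K0) : D) = (↑k : D) + ↑l := rfl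
          show (↑(g : Dˣ) : D) * ↑(k + l) * ↑(g : Dˣ)⁻¹ = _
          rw [h2]
          simp [mul_add, add_mul])
        commutes' := fun r => Subtype.ext (by
          have h2 : ((algebraMap F ↥K0 r : ↥K0) : D) = algebraMap F D r := rfl
          show (↑(g : Dˣ) : D) * ↑(algebraMap F ↥K0 r) * ↑(g : Dˣ)⁻¹ = ↑(algebraMap F ↥K0 r)
          rw [h2, mul_assoc, Algebra.commutes r ((↑(g : Dˣ)⁻¹ : D)), ← mul_assoc]
          simp) }
      map_one' := by
        ext k
        show (↑(((1 : ↥G) : Dˣ)) : D) * ↑k * ↑(((1 : ↥G) : Dˣ))⁻¹ = ↑k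
        simp
      map_mul' := fun g h => by
        ext k
        show (↑((g * h : ↥G) : Dˣ) : D) * ↑k * ↑((g * h : ↥G) : Dˣ)⁻¹ =
          ↑(g : Dˣ) * ((↑(h : Dˣ) : D) * ↑k * ↑(h : Dˣ)⁻¹) * ↑(g : Dˣ)⁻¹
        have : ((g * h : ↥G) : Dˣ) = (g : Dˣ) * (h : Dˣ) := rfl
        rw [this, mul_inv_rev]
        push_cast
        simp [mul_assoc] }, fun g k => rfl⟩
  -- kernel
  have hker : conjK.ker = Hgrp.subgroupOf G := by
    ext g
    rw [MonoidHom.mem_ker, Subgroup.mem_subgroupOf]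
    constructor
    · intro hgk
      have hfix : ∀ k : ↥K0, (↑(g : Dˣ) : D) * ↑k * ↑(g : Dˣ)⁻¹ = ↑k := by
        intro k
        rw [← hconjK_apply g k, hgk]
        rfl
      refine ⟨Subgroup.mem_centralizer_iff.mpr fun a ha => ?_, g.2⟩
      have hk : (↑a : D) ∈ K0 := Algebra.subset_adjoin ⟨a, ha, rfl⟩
      have h2 := hfix ⟨↑a, hk⟩
      have hcm : (↑(g : Dˣ) : D) * ↑a = ↑a * ↑(g : Dˣ) := by
        have h3 := congrArg (fun x => x * (↑(g : Dˣ) : D)) h2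
        simpa [mul_assoc] using h3
      exact Units.ext (by simpa using hcm.symm)
    · intro hg
      ext k
      show (↑((conjK g) k) : D) = ↑k
      rw [hconjK_apply]
      have h4 := hcentralK0 (g : Dˣ) hg.1 ↑k k.2
      calc (↑(g : Dˣ) : D) * ↑k * ↑(g : Dˣ)⁻¹ = ↑k * ↑(g : Dˣ) * ↑(g : Dˣ)⁻¹ := by rw [h4]
        _ = ↑k := by simp [mul_assoc]
  -- fixed points are central
  have hfixbot : ∀ k : ↥K0, (∀ g : ↥G, conjK g k = k) → ∃ r : F, algebraMap F D r = ↑k := by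
    intro k hk
    have hcm : ∀ g : Dˣ, g ∈ G → (↑g : D) * ↑k = ↑k * ↑g := by
      intro g hg
      have h2 : (↑g : D) * ↑k * ↑g⁻¹ = ↑k := by
        rw [← hconjK_apply ⟨g, hg⟩ k, hk ⟨g, hg⟩]
      have h3 := congrArg (fun x => x * (↑g : D)) h2
      simpa [mul_assoc] using h3
    have h3 : ∀ x ∈ Units.val '' (G : Set Dˣ), ∀ y ∈ ({(↑k : D)} : Set D),
        x * y = y * x := by
      rintro _ ⟨g, hg, rfl⟩ y hy
      rw [Set.mem_singleton_iff.mp hy]; exact hcm g hg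
    have h4 : ∀ x : D, x * ↑k = ↑k * x := by
      intro x
      have hx : x ∈ Algebra.adjoin F (Units.val '' (G : Set Dˣ)) := by rw [hirr]; trivial
      exact stmt2_adjoin_comm h3 x hx (↑k) (Algebra.subset_adjoin rfl)
    have h5 : (↑k : D) ∈ Subalgebra.center F D := Subalgebra.mem_center_iff.mpr h4
    rw [hcenter] at h5
    exact Algebra.mem_bot.mp h5
  haveI hGal : IsGalois F ↥K0 := by
    apply IsGalois.of_fixedField_eq_bot
    apply le_antisymm ?_ bot_le
    intro k hk
    rw [IntermediateField.mem_bot]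
    have hfix : ∀ g : ↥G, conjK g k = k := fun g => hk ⟨conjK g, Subgroup.mem_top _⟩
    obtain ⟨r, hr⟩ := hfixbot k hfix
    exact ⟨r, Subtype.ext hr⟩
  have hrange : conjK.range = ⊤ := by
    have h1 : IntermediateField.fixedField conjK.range = ⊥ := by
      apply le_antisymm ?_ bot_le
      intro k hk
      rw [IntermediateField.mem_bot]
      have hfix : ∀ g : ↥G, conjK g k = k := fun g => hk ⟨conjK g, ⟨g, rfl⟩⟩
      obtain ⟨r, hr⟩ := hfixbot k hfix
      exact ⟨r, Subtype.ext hr⟩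
    have h2 := IntermediateField.fixingSubgroup_fixedField conjK.range
    rw [h1, IntermediateField.fixingSubgroup_bot] at h2
    exact h2.symm
  have hsurj : Function.Surjective conjK := MonoidHom.range_eq_top.mp hrange
  -- Part 1 : basis of D over S indexed by the coset space
  letI divS : DivisionRing ↥S :=
    { (inferInstance : Ring ↥S) with
      inv := fun x => ⟨(x : D)⁻¹, hinv _ _ x.2⟩
      mul_inv_cancel := fun a ha => Subtype.ext (mul_inv_cancel₀ (fun h => ha (Subtype.ext h)))
      inv_zero := Subtype.ext inv_zero
      exists_pair_ne := ⟨0, 1, fun h => zero_ne_one (congrArg Subtype.val h)⟩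
      nnqsmul := _
      qsmul := _ }
  set H' : Subgroup ↥G := Hgrp.subgroupOf G with hH'
  set vq : (↥G ⧸ H') → Dˣ := fun q => ↑(Quotient.out q) with hvq
  have hindep : LinearIndependent ↥S (fun q : ↥G ⧸ H' => ((vq q : Dˣ) : D)) := by
    apply stmt2_linearIndependent S (Units.val '' (A : Set Dˣ))
    · exact fun t ht => hK0S (Algebra.subset_adjoin ht)
    · exact fun s hs t ht => hScommK s hs t (Algebra.subset_adjoin ht)
    · exact fun q t ht => hconjA _ (Quotient.out q).2 t ht
    · intro i j hij
      by_contra hcon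
      push_neg at hcon
      apply hij
      have hu : ∀ a : Dˣ, a ∈ A → vq i * a * (vq i)⁻¹ = vq j * a * (vq j)⁻¹ := by
        intro a ha
        have h1 := hcon ↑a ⟨a, ha, rfl⟩
        refine Units.ext ?_
        push_cast at h1 ⊢
        exact h1
      have hw : (Quotient.out j)⁻¹ * Quotient.out i ∈ H' := by
        refine Subgroup.mem_subgroupOf.mpr ⟨Subgroup.mem_centralizer_iff.mpr fun a ha => ?_,
          ((Quotient.out j)⁻¹ * Quotient.out i : ↥G).2⟩
        have h5 := hu a ha
        show a * ((vq j)⁻¹ * vq i) = (vq j)⁻¹ * vq i * a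
        calc a * ((vq j)⁻¹ * vq i) = (vq j)⁻¹ * (vq j * a * (vq j)⁻¹) * vq i := by group
          _ = (vq j)⁻¹ * (vq i * a * (vq i)⁻¹) * vq i := by rw [← h5]
          _ = (vq j)⁻¹ * vq i * a := by group
      have h6 := QuotientGroup.eq.mpr hw
      rw [QuotientGroup.out_eq', QuotientGroup.out_eq'] at h6
      exact h6.symm
  have hspan : ⊤ ≤ Submodule.span ↥S (Set.range fun q : ↥G ⧸ H' => ((vq q : Dˣ) : D)) := by
    have hG_in_span : ∀ u : Dˣ, u ∈ G →
        (↑u : D) ∈ Submodule.span ↥S (Set.range fun q : ↥G ⧸ H' => ((vq q : Dˣ) : D)) := by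
      intro u hu
      set q : ↥G ⧸ H' := QuotientGroup.mk ⟨u, hu⟩ with hq
      have hmem : (Quotient.out q)⁻¹ * ⟨u, hu⟩ ∈ H' :=
        QuotientGroup.eq.mp (QuotientGroup.out_eq' q)
      set h : ↥G := (Quotient.out q)⁻¹ * ⟨u, hu⟩ with hh
      have hhH : (h : Dˣ) ∈ Hgrp := (Subgroup.mem_subgroupOf).mp hmem
      have hs0 : vq q * (h : Dˣ) * (vq q)⁻¹ ∈ Hgrp :=
        hHnormal _ (Quotient.out q).2 _ hhH
      have hueq : u = (vq q * (h : Dˣ) * (vq q)⁻¹) * vq q := by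
        have : (vq q) * (h : Dˣ) = u := by
          have : (Quotient.out q) * h = ⟨u, hu⟩ := by rw [hh]; group
          exact congrArg (Subtype.val) this
        rw [← this]; group
      have hs0S : ((vq q * (h : Dˣ) * (vq q)⁻¹ : Dˣ) : D) ∈ S :=
        Algebra.subset_adjoin ⟨_, hs0, rfl⟩
      have hfinal : (↑u : D) =
          (⟨_, hs0S⟩ : ↥S) • ((vq q : Dˣ) : D) := by
        show (↑u : D) = ((vq q * (h : Dˣ) * (vq q)⁻¹ : Dˣ) : D) * ((vq q : Dˣ) : D)
        rw [hueq]; push_cast; ring_nf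
      rw [hfinal]
      exact Submodule.smul_mem _ _ (Submodule.subset_span ⟨q, rfl⟩)
    intro x _
    have hx : x ∈ Subalgebra.toSubmodule (Algebra.adjoin F (Units.val '' (G : Set Dˣ))) := by
      rw [hirr]; trivial
    rw [Algebra.adjoin_eq_span] at hx
    have hx2 := hx
    have hclosure : (Submonoid.closure (Units.val '' (G : Set Dˣ)) : Submonoid D) =
        Submonoid.map (Units.coeHom D) G.toSubmonoid := by
      have hval : Units.val '' (G : Set Dˣ) =
          ⇑(Units.coeHom D) '' ((G.toSubmonoid : Submonoid Dˣ) : Set Dˣ) := rfl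
      rw [hval, ← MonoidHom.map_mclosure, Submonoid.closure_eq]
    refine Submodule.span_induction (fun y hy => ?_) (Submodule.zero_mem _)
      (fun y z _ _ hy hz => Submodule.add_mem _ hy hz) (fun c y _ hy => ?_) hx2
    · rw [SetLike.mem_coe, hclosure] at hy
      obtain ⟨u, hu, rfl⟩ := hy
      exact hG_in_span u hu
    · have : c • y = (⟨algebraMap F D c, S.algebraMap_mem c⟩ : ↥S) • y := by
        show c • y = algebraMap F D c * y
        rw [Algebra.smul_def]
      rw [this]
      exact Submodule.smul_mem _ _ hy
  have hbasis : Module.Basis (↥G ⧸ H') ↥S D := Module.Basis.mk hindep hspan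
  have hrank : Module.finrank ↥S D = Nat.card (↥G ⧸ H') :=
    Module.finrank_eq_nat_card_basis hbasis
  refine ⟨?_, part2a, ?_⟩
  · rw [hrank]
    rfl
  · refine ⟨↥K0, fK, inferInstance, K0.val, ?_, hGal, conjK, hsurj, hker⟩
    exact K0.range_val
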